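/- Let G be a group, k a positive natural number, s : Fin k → G, and let π : G →* H be a surjective group homomorphism. Let H_G(n) and H_H(n) be the Shannon entropies of the n-step random walk distributions on (G, s) and on (H, π ∘ s) respectively. Then limsup_{n → ∞} H_H(n)/n ≤ limsup_{n → ∞} H_G(n)/n: the asymptotic entropy of a quotient marked group is at most the asymptotic entropy of the group (property (∗) of Proposition 1.9 for the asymptotic entropy). -/

import Mathlib

open Filter

/-- The `n`-step distribution of the simple random walk on the marked group `(G, s)`. -/
noncomputable def rwDist {G : Type*} [Group G] {k : ℕ} (s : Fin k → G) (n : ℕ) (g : G) : ℝ :=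
  (Nat.card {w : Fin n → Fin k | (List.ofFn (fun i => s (w i))).prod = g} : ℝ) / k ^ n

/-- The Shannon entropy of the `n`-step distribution of the simple random walk
on the marked group `(G, s)`. -/
noncomputable def rwEntropy {G : Type*} [Group G] {k : ℕ} (s : Fin k → G) (n : ℕ) : ℝ :=
  ∑' g : G, Real.negMulLog (rwDist s n g)

section Aux

open Finset

open scoped Classical

variable {G : Type*} [Group G] {k : ℕ}

/-- The word-product map. -/
def wordProd (s : Fin k → G) (n : ℕ) (w : Fin n → Fin k) : G :=
  (List.ofFn (fun i => s (w i))).prod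

lemma rwDist_eq (s : Fin k → G) (n : ℕ) (g : G) :
    rwDist s n g = ((Finset.univ.filter fun w => wordProd s n w = g).card : ℝ) / (k : ℝ) ^ n := by
  unfold rwDist wordProd
  congr 2
  have h : {w : Fin n → Fin k | (List.ofFn (fun i => s (w i))).prod = g} =
      ((Finset.univ.filter fun w : Fin n → Fin k =>
        (List.ofFn (fun i => s (w i))).prod = g : Finset (Fin n → Fin k)) :
          Set (Fin n → Fin k)) := by
    ext w; simp
  rw [h, Nat.card_coe_set_eq, Set.ncard_coe_finset]

lemma rwDist_nonneg (s : Fin k → G) (n : ℕ) (g : G) : 0 ≤ rwDist s n g := by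
  rw [rwDist_eq]; positivity

lemma rwDist_le_one (hk : 0 < k) (s : Fin k → G) (n : ℕ) (g : G) : rwDist s n g ≤ 1 := by
  rw [rwDist_eq]
  rw [div_le_one (by positivity)]
  calc ((Finset.univ.filter fun w => wordProd s n w = g).card : ℝ)
      ≤ ((Finset.univ : Finset (Fin n → Fin k)).card : ℝ) := by
        exact_mod_cast Finset.card_le_card (Finset.filter_subset _ _)
    _ = (k : ℝ) ^ n := by
        simp [Finset.card_univ]

lemma rwDist_eq_zero (s : Fin k → G) (n : ℕ) (g : G)
    (hg : g ∉ Finset.univ.image (wordProd s n)) : rwDist s n g = 0 := by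
  rw [rwDist_eq]
  have : (Finset.univ.filter fun w => wordProd s n w = g) = ∅ := by
    ext w
    simp only [Finset.mem_filter, Finset.mem_univ, true_and, Finset.notMem_empty, iff_false]
    intro h
    exact hg (h ▸ Finset.mem_image_of_mem _ (Finset.mem_univ w))
  rw [this]; simp

lemma rwDist_sum (hk : 0 < k) (s : Fin k → G) (n : ℕ) :
    ∑ g ∈ Finset.univ.image (wordProd s n), rwDist s n g = 1 := by
  simp_rw [rwDist_eq]
  rw [← Finset.sum_div]
  rw [div_eq_one_iff_eq (by positivity)]
  rw [← Nat.cast_sum]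
  rw [← Finset.card_eq_sum_card_fiberwise (f := wordProd s n)
    (fun w _ => Finset.mem_image_of_mem _ (Finset.mem_univ w))]
  simp [Finset.card_univ]

lemma rwEntropy_eq (s : Fin k → G) (n : ℕ) :
    rwEntropy s n = ∑ g ∈ Finset.univ.image (wordProd s n), Real.negMulLog (rwDist s n g) := by
  unfold rwEntropy
  exact tsum_eq_sum fun g hg => by rw [rwDist_eq_zero s n g hg, Real.negMulLog_zero]

lemma rwEntropy_nonneg (hk : 0 < k) (s : Fin k → G) (n : ℕ) : 0 ≤ rwEntropy s n := by
  rw [rwEntropy_eq]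
  exact Finset.sum_nonneg fun g _ =>
    Real.negMulLog_nonneg (rwDist_nonneg s n g) (rwDist_le_one hk s n g)

lemma rwEntropy_le (hk : 0 < k) (s : Fin k → G) (n : ℕ) :
    rwEntropy s n ≤ n * Real.log k := by
  rw [rwEntropy_eq]
  have key : ∀ g ∈ Finset.univ.image (wordProd s n),
      Real.negMulLog (rwDist s n g) ≤ rwDist s n g * (n * Real.log k) := by
    intro g _
    rw [rwDist_eq]
    set c : ℕ := (Finset.univ.filter fun w => wordProd s n w = g).card with hc
    rcases Nat.eq_zero_or_pos c with h0 | hpos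
    · simp [h0]
    · have hkn : (0:ℝ) < (k:ℝ) ^ n := by positivity
      have hcpos : (0:ℝ) < (c:ℝ) := by exact_mod_cast hpos
      have hlog : Real.log ((c:ℝ) / (k:ℝ)^n) = Real.log c - n * Real.log k := by
        rw [Real.log_div (ne_of_gt hcpos) (ne_of_gt hkn), Real.log_pow]
      rw [Real.negMulLog, hlog]
      have hlogc : 0 ≤ Real.log (c:ℝ) := Real.log_nonneg (by exact_mod_cast hpos)
      have hp : 0 ≤ (c:ℝ) / (k:ℝ)^n := by positivity
      nlinarith [mul_nonneg hp hlogc]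
  calc ∑ g ∈ Finset.univ.image (wordProd s n), Real.negMulLog (rwDist s n g)
      ≤ ∑ g ∈ Finset.univ.image (wordProd s n), rwDist s n g * (n * Real.log k) :=
        Finset.sum_le_sum key
    _ = (∑ g ∈ Finset.univ.image (wordProd s n), rwDist s n g) * (n * Real.log k) := by
        rw [Finset.sum_mul]
    _ = n * Real.log k := by rw [rwDist_sum hk s n, one_mul]

lemma negMulLog_add_le {a b : ℝ} (ha : 0 ≤ a) (hb : 0 ≤ b) :
    Real.negMulLog (a + b) ≤ Real.negMulLog a + Real.negMulLog b := by
  rcases ha.eq_or_lt with rfl | ha'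
  · simp
  rcases hb.eq_or_lt with rfl | hb'
  · simp
  have h1 : Real.log a ≤ Real.log (a + b) := Real.log_le_log ha' (by linarith)
  have h2 : Real.log b ≤ Real.log (a + b) := Real.log_le_log hb' (by linarith)
  simp only [Real.negMulLog]
  nlinarith [mul_le_mul_of_nonneg_left h1 ha, mul_le_mul_of_nonneg_left h2 hb]

lemma negMulLog_sum_le {ι : Type*} (t : Finset ι) (f : ι → ℝ) (hf : ∀ i ∈ t, 0 ≤ f i) :
    Real.negMulLog (∑ i ∈ t, f i) ≤ ∑ i ∈ t, Real.negMulLog (f i) := by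
  induction t using Finset.cons_induction with
  | empty => simp
  | cons a t ha ih =>
    rw [Finset.sum_cons, Finset.sum_cons]
    calc Real.negMulLog (f a + ∑ i ∈ t, f i)
        ≤ Real.negMulLog (f a) + Real.negMulLog (∑ i ∈ t, f i) :=
          negMulLog_add_le (hf a (Finset.mem_cons_self a t))
            (Finset.sum_nonneg fun i hi => hf i (Finset.mem_cons_of_mem hi))
      _ ≤ Real.negMulLog (f a) + ∑ i ∈ t, Real.negMulLog (f i) := by
          gcongr
          exact ih fun i hi => hf i (Finset.mem_cons_of_mem hi)

lemma wordProd_comp {H : Type*} [Group H] (π : G →* H) (s : Fin k → G) (n : ℕ)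
    (w : Fin n → Fin k) : wordProd (⇑π ∘ s) n w = π (wordProd s n w) := by
  unfold wordProd
  rw [map_list_prod]
  simp [List.map_ofFn, Function.comp_def]

lemma rwDist_fiber {H : Type*} [Group H] (π : G →* H) (s : Fin k → G) (n : ℕ) (h : H) :
    rwDist (⇑π ∘ s) n h =
      ∑ g ∈ (Finset.univ.image (wordProd s n)).filter (fun g => π g = h), rwDist s n g := by
  simp_rw [rwDist_eq, ← Finset.sum_div]
  congr 1
  rw [← Nat.cast_sum]
  congr 1
  have key : (Finset.univ.filter fun w => wordProd (⇑π ∘ s) n w = h).card =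
      ∑ g ∈ (Finset.univ.image (wordProd s n)).filter (fun g => π g = h),
        ((Finset.univ.filter fun w => wordProd (⇑π ∘ s) n w = h).filter
          (fun w => wordProd s n w = g)).card := by
    apply Finset.card_eq_sum_card_fiberwise (f := wordProd s n)
    intro w hw
    rw [Finset.mem_coe, Finset.mem_filter] at hw ⊢
    refine ⟨Finset.mem_image_of_mem _ (Finset.mem_univ w), ?_⟩
    rw [← wordProd_comp π s n w]; exact hw.2
  rw [key]
  apply Finset.sum_congr rfl
  intro g hg
  rw [Finset.mem_filter] at hg
  congr 1
  ext w
  simp only [Finset.mem_filter, Finset.mem_univ, true_and]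
  constructor
  · exact fun hw => hw.2
  · intro hw
    exact ⟨by rw [wordProd_comp π s n w, hw, hg.2], hw⟩

lemma rwEntropy_comp_le {H : Type*} [Group H] (π : G →* H) (s : Fin k → G) (n : ℕ) :
    rwEntropy (⇑π ∘ s) n ≤ rwEntropy s n := by
  rw [rwEntropy_eq, rwEntropy_eq]
  have himg : Finset.univ.image (wordProd (⇑π ∘ s) n) =
      (Finset.univ.image (wordProd s n)).image π := by
    rw [Finset.image_image]
    apply Finset.image_congr
    intro w _
    exact wordProd_comp π s n w
  calc ∑ h ∈ Finset.univ.image (wordProd (⇑π ∘ s) n), Real.negMulLog (rwDist (⇑π ∘ s) n h)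
      ≤ ∑ h ∈ Finset.univ.image (wordProd (⇑π ∘ s) n),
          ∑ g ∈ (Finset.univ.image (wordProd s n)).filter (fun g => π g = h),
            Real.negMulLog (rwDist s n g) := by
        apply Finset.sum_le_sum
        intro h _
        rw [rwDist_fiber π s n h]
        exact negMulLog_sum_le _ _ fun g _ => rwDist_nonneg s n g
    _ = ∑ g ∈ Finset.univ.image (wordProd s n), Real.negMulLog (rwDist s n g) := by
        apply Finset.sum_fiberwise_of_maps_to
        intro g hg
        rw [himg]
        exact Finset.mem_image_of_mem π hg

end Aux

/-- The asymptotic entropy of a quotient marked group is at most the asymptotic entropy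
of the group. -/
theorem asymptotic_entropy_quotient_le {G H : Type*} [Group G] [Group H] (k : ℕ) (hk : 0 < k)
    (s : Fin k → G) (π : G →* H) (hπ : Function.Surjective π) :
    (Filter.atTop.limsup fun n : ℕ => rwEntropy (⇑π ∘ s) n / n) ≤
      Filter.atTop.limsup fun n : ℕ => rwEntropy s n / n := by
  have hle : ∀ n : ℕ, rwEntropy (⇑π ∘ s) n / (n : ℝ) ≤ rwEntropy s n / (n : ℝ) := by
    intro n
    rw [div_eq_mul_inv, div_eq_mul_inv]
    exact mul_le_mul_of_nonneg_right (rwEntropy_comp_le π s n) (by positivity)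
  have hu : Filter.IsCoboundedUnder (· ≤ ·) Filter.atTop
      (fun n : ℕ => rwEntropy (⇑π ∘ s) n / n) := by
    apply isCoboundedUnder_le_of_le Filter.atTop (x := 0)
    intro n
    exact div_nonneg (rwEntropy_nonneg hk _ n) (Nat.cast_nonneg n)
  have hv : Filter.IsBoundedUnder (· ≤ ·) Filter.atTop
      (fun n : ℕ => rwEntropy s n / n) := by
    apply isBoundedUnder_of
    refine ⟨Real.log k, fun n => ?_⟩
    rcases Nat.eq_zero_or_pos n with rfl | hn
    · simp [Real.log_nonneg (Nat.one_le_cast.mpr hk)]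
    · have hn' : (0:ℝ) < (n:ℝ) := by exact_mod_cast hn
      rw [div_le_iff₀ hn']
      calc rwEntropy s n ≤ n * Real.log k := rwEntropy_le hk s n
        _ = Real.log k * n := by ring
  exact Filter.limsup_le_limsup (Filter.Eventually.of_forall hle) hu hv
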